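/- Let f(x) = (x - ζ₁) g(x) be a complex polynomial of degree d, where g has degree d - 1. Then ‖g‖_{d-1} ≤ √(d / (1 + |ζ₁|²)) · ‖f‖_d, where ‖·‖_m denotes the Weyl (Bombieri) norm on polynomials of degree at most m, defined by ‖p‖_m² = Σ_{i=0}^{m} |pᵢ|² / C(m, i). -/

import Mathlib

open Polynomial Finset

/-- The Weyl (Bombieri) norm on polynomials of degree at most `m`:
`‖p‖_m = √(∑_{i=0}^m |pᵢ|²/C(m,i))`. -/
noncomputable def weylNorm (m : ℕ) (p : Polynomial ℂ) : ℝ :=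
  Real.sqrt (∑ i ∈ Finset.range (m + 1), ‖p.coeff i‖ ^ 2 / (Nat.choose m i))

lemma key_ineq (m : ℕ) (r : ℝ) (s : ℕ → ℝ) (hsm : s (m+1) = 0) :
    (1 + r^2) * ∑ j ∈ Finset.range (m+1), (s j)^2 / (m.choose j : ℝ) ≤
      ((m : ℝ)+1) * r^2 * (s 0)^2 +
        ∑ j ∈ Finset.range (m+1), ((j : ℝ)+1) * (s j - r * s (j+1))^2 / (m.choose j : ℝ) := by
  set C : ℕ → ℝ := fun j => (m.choose j : ℝ) with hCdef
  have hC : ∀ j, j ≤ m → 0 < C j := fun j hj => by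
    simp only [hCdef]; exact Nat.cast_pos.mpr (Nat.choose_pos hj)
  have hCid : ∀ j, j < m → ((j:ℝ)+1) * C (j+1) = ((m:ℝ) - j) * C j := by
    intro j hj
    have h := Nat.choose_succ_right_eq m j
    have hcast : (m.choose (j+1) : ℝ) * ((j:ℝ)+1) = (m.choose j : ℝ) * ((m:ℝ) - j) := by
      have := congrArg (fun n : ℕ => (n : ℝ)) h
      push_cast [Nat.cast_sub hj.le] at this
      linarith [this]
    simp only [hCdef]
    linarith [hcast]
  -- expand the squares
  have expand : ∑ j ∈ range (m+1), ((j:ℝ)+1)*(s j - r*s (j+1))^2/C j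
      = ((∑ j ∈ range (m+1), ((j:ℝ)+1)*(s j)^2/C j)
        + (∑ j ∈ range (m+1), ((j:ℝ)+1)*r^2*(s (j+1))^2/C j))
        - ∑ j ∈ range (m+1), 2*r*((j:ℝ)+1)*(s j)*(s (j+1))/C j := by
    rw [← Finset.sum_add_distrib, ← Finset.sum_sub_distrib]
    exact Finset.sum_congr rfl fun j _ => by ring
  -- middle sum reindex
  have mid : ((m:ℝ)+1)*r^2*(s 0)^2 + ∑ j ∈ range (m+1), ((j:ℝ)+1)*r^2*(s (j+1))^2/C j
      = ∑ j ∈ range (m+1), r^2*((m:ℝ)+1-j)*(s j)^2/C j := by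
    rw [Finset.sum_range_succ' (fun j => r^2*((m:ℝ)+1-j)*(s j)^2/C j) m]
    rw [Finset.sum_range_succ (fun j => ((j:ℝ)+1)*r^2*(s (j+1))^2/C j) m]
    have hC0 : C 0 = 1 := by simp [hCdef]
    have hterm : ∀ j ∈ range m, ((j:ℝ)+1)*r^2*(s (j+1))^2/C j
        = r^2*((m:ℝ)+1-((j:ℕ)+1:ℕ))*(s (j+1))^2/C (j+1) := by
      intro j hj
      have hj' : j < m := Finset.mem_range.mp hj
      have h1 := hC j hj'.le
      have h2 := hC (j+1) hj'
      have hid := hCid j hj'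
      push_cast
      rw [div_eq_div_iff h1.ne' h2.ne']
      linear_combination (r^2 * s (j+1)^2) * hid
    rw [Finset.sum_congr rfl hterm]
    push_cast
    rw [hsm, hC0]
    ring
  -- cross term bound
  have cross : ∑ j ∈ range (m+1), 2*r*((j:ℝ)+1)*(s j)*(s (j+1))/C j
      ≤ ∑ j ∈ range (m+1), ((j:ℝ) + r^2*((m:ℝ)-j)) * (s j)^2 / C j := by
    rw [Finset.sum_range_succ (fun j => 2*r*((j:ℝ)+1)*(s j)*(s (j+1))/C j) m, hsm]
    have hD2 : ∑ j ∈ range (m+1), ((j:ℝ) + r^2*((m:ℝ)-j)) * (s j)^2 / C j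
        = ∑ j ∈ range m, (((j:ℝ)+1)*(s (j+1))^2/C (j+1) + r^2*((m:ℝ)-j)*(s j)^2/C j) := by
      have e1 : ∑ j ∈ range (m+1), ((j:ℝ) + r^2*((m:ℝ)-j)) * (s j)^2 / C j
          = (∑ j ∈ range (m+1), (j:ℝ)*(s j)^2/C j)
            + ∑ j ∈ range (m+1), r^2*((m:ℝ)-j)*(s j)^2/C j := by
        rw [← Finset.sum_add_distrib]
        exact Finset.sum_congr rfl fun j _ => by ring
      rw [e1, Finset.sum_range_succ' (fun j => (j:ℝ)*(s j)^2/C j) m,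
        Finset.sum_range_succ (fun j => r^2*((m:ℝ)-j)*(s j)^2/C j) m,
        Finset.sum_add_distrib]
      push_cast
      simp [sub_self]
    rw [hD2]
    have hterm : ∀ j ∈ range m, 2*r*((j:ℝ)+1)*(s j)*(s (j+1))/C j
        ≤ ((j:ℝ)+1)*(s (j+1))^2/C (j+1) + r^2*((m:ℝ)-j)*(s j)^2/C j := by
      intro j hj
      have hj' : j < m := Finset.mem_range.mp hj
      have h1 := hC j hj'.le
      have h2 := hC (j+1) hj'
      have hid := hCid j hj'
      have hmj : (0:ℝ) < (m:ℝ) - j := by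
        have : (j:ℝ) < m := by exact_mod_cast hj'
        linarith
      set a := r*((m:ℝ)-j)*(s j) with ha
      set b := ((j:ℝ)+1)*(s (j+1)) with hb
      have hP : (0:ℝ) < ((m:ℝ)-j)*C j := mul_pos hmj h1
      have e1 : 2*r*((j:ℝ)+1)*(s j)*(s (j+1))/C j = (2*a*b)/(((m:ℝ)-j)*C j) := by
        rw [ha, hb]; field_simp
      have e2 : r^2*((m:ℝ)-j)*(s j)^2/C j = a^2/(((m:ℝ)-j)*C j) := by
        rw [ha]; field_simp
      have e3 : ((j:ℝ)+1)*(s (j+1))^2/C (j+1) = b^2/(((m:ℝ)-j)*C j) := by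
        rw [hb, ← hid]; field_simp
      rw [e1, e2, e3]
      rw [← add_div, div_le_div_iff₀ hP hP]
      nlinarith [sq_nonneg (a - b)]
    calc ∑ j ∈ range m, 2*r*((j:ℝ)+1)*(s j)*(s (j+1))/C j + 2*r*((m:ℝ)+1)*(s m)*0/C m
        = ∑ j ∈ range m, 2*r*((j:ℝ)+1)*(s j)*(s (j+1))/C j := by ring
      _ ≤ ∑ j ∈ range m, (((j:ℝ)+1)*(s (j+1))^2/C (j+1) + r^2*((m:ℝ)-j)*(s j)^2/C j) :=
          Finset.sum_le_sum hterm
  -- put it together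
  have final : (1+r^2) * ∑ j ∈ range (m+1), (s j)^2/C j
      = (∑ j ∈ range (m+1), ((j:ℝ)+1)*(s j)^2/C j)
        + (∑ j ∈ range (m+1), r^2*((m:ℝ)+1-j)*(s j)^2/C j)
        - ∑ j ∈ range (m+1), ((j:ℝ) + r^2*((m:ℝ)-j)) * (s j)^2 / C j := by
    rw [← Finset.sum_add_distrib, ← Finset.sum_sub_distrib, Finset.mul_sum]
    exact Finset.sum_congr rfl fun j _ => by ring
  rw [expand, final, ← mid]
  linarith [cross]

/-- If `f = (x - ζ₁) g` has degree `d` and `g` has degree `d - 1`, then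
`‖g‖_{d-1} ≤ √(d/(1+|ζ₁|²)) ‖f‖_d`. -/
theorem weylNorm_factor_le (d : ℕ) (hd : 1 ≤ d) (ζ₁ : ℂ) (f g : Polynomial ℂ)
    (hf : f = (X - C ζ₁) * g) (hgdeg : g.natDegree = d - 1) :
    weylNorm (d - 1) g ≤
      Real.sqrt ((d : ℝ) / (1 + ‖ζ₁‖ ^ 2)) * weylNorm d f := by
  obtain ⟨m, rfl⟩ : ∃ m, d = m + 1 := ⟨d - 1, (Nat.succ_pred_eq_of_pos hd).symm⟩
  simp only [Nat.add_sub_cancel] at hgdeg ⊢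
  set r : ℝ := ‖ζ₁‖ with hr
  set s : ℕ → ℝ := fun j => ‖g.coeff j‖ with hs
  have hr0 : (0:ℝ) ≤ r := norm_nonneg _
  have hrpos : (0:ℝ) < 1 + r^2 := by positivity
  set Sg : ℝ := ∑ j ∈ Finset.range (m+1), (s j)^2 / (Nat.choose m j : ℝ) with hSg
  set Sf : ℝ := ∑ i ∈ Finset.range (m+2), ‖f.coeff i‖ ^ 2 / (Nat.choose (m+1) i : ℝ)
    with hSf
  have hSg0 : 0 ≤ Sg := Finset.sum_nonneg fun j _ => by positivity
  have hSf0 : 0 ≤ Sf := Finset.sum_nonneg fun j _ => by positivity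
  -- the coefficients of f
  have hf0 : ‖f.coeff 0‖ = r * s 0 := by
    rw [hf, Polynomial.mul_coeff_zero]
    simp [hr, hs, map_mul]
  have hfj : ∀ j, f.coeff (j+1) = g.coeff j - ζ₁ * g.coeff (j+1) := by
    intro j
    rw [hf, sub_mul, Polynomial.coeff_sub, Polynomial.coeff_X_mul, Polynomial.coeff_C_mul]
  have hsm : s (m+1) = 0 := by
    simp [hs, Polynomial.coeff_eq_zero_of_natDegree_lt (by omega : g.natDegree < m+1)]
  -- main estimate : (1+r²) Sg ≤ (m+1) Sf
  have main : (1 + r^2) * Sg ≤ ((m:ℝ)+1) * Sf := by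
    have step1 : ((m:ℝ)+1) * Sf
        = ((m:ℝ)+1) * r^2 * (s 0)^2 +
          ∑ j ∈ Finset.range (m+1),
            ((j:ℝ)+1) * ‖f.coeff (j+1)‖ ^ 2 / (Nat.choose m j : ℝ) := by
      rw [hSf, Finset.mul_sum,
        Finset.sum_range_succ' (fun i => ((m:ℝ)+1) * (‖f.coeff i‖ ^ 2 / (Nat.choose (m+1) i : ℝ))) (m+1)]
      rw [add_comm]
      congr 1
      · simp [hf0]; ring
      · apply Finset.sum_congr rfl
        intro j hj
        have hj' : j < m + 1 := Finset.mem_range.mp hj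
        have h1 : (0:ℝ) < (Nat.choose m j : ℝ) := by
          exact_mod_cast Nat.choose_pos (by omega : j ≤ m)
        have h2 : (0:ℝ) < (Nat.choose (m+1) (j+1) : ℝ) := by
          exact_mod_cast Nat.choose_pos (by omega : j + 1 ≤ m + 1)
        have hid : ((m:ℝ)+1) * (Nat.choose m j : ℝ) = (Nat.choose (m+1) (j+1) : ℝ) * ((j:ℝ)+1) := by
          exact_mod_cast congrArg (fun n : ℕ => (n:ℝ)) (Nat.add_one_mul_choose_eq m j)
        field_simp
        linear_combination (‖f.coeff (j+1)‖ ^ 2) * hid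
    have step2 : ∀ j ∈ Finset.range (m+1),
        ((j:ℝ)+1) * (s j - r * s (j+1))^2 / (Nat.choose m j : ℝ)
          ≤ ((j:ℝ)+1) * ‖f.coeff (j+1)‖ ^ 2 / (Nat.choose m j : ℝ) := by
      intro j hj
      have hj' : j < m + 1 := Finset.mem_range.mp hj
      have h1 : (0:ℝ) < (Nat.choose m j : ℝ) := by
        exact_mod_cast Nat.choose_pos (by omega : j ≤ m)
      have habs : |s j - r * s (j+1)| ≤ ‖f.coeff (j+1)‖ := by
        rw [hfj j]
        have := abs_norm_sub_norm_le (g.coeff j) (ζ₁ * g.coeff (j+1))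
        simpa [hs, hr, map_mul] using this
      have hsq : (s j - r * s (j+1))^2 ≤ ‖f.coeff (j+1)‖ ^ 2 := by
        rw [← sq_abs (s j - r * s (j+1))]
        exact pow_le_pow_left₀ (abs_nonneg _) habs 2
      gcongr ((j:ℝ)+1) * ?_ / _
    calc (1 + r^2) * Sg
        ≤ ((m:ℝ)+1) * r^2 * (s 0)^2 +
            ∑ j ∈ Finset.range (m+1), ((j:ℝ)+1) * (s j - r * s (j+1))^2 / (Nat.choose m j : ℝ) :=
          key_ineq m r s hsm
      _ ≤ ((m:ℝ)+1) * r^2 * (s 0)^2 +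
            ∑ j ∈ Finset.range (m+1),
              ((j:ℝ)+1) * ‖f.coeff (j+1)‖ ^ 2 / (Nat.choose m j : ℝ) := by
          exact add_le_add_right (Finset.sum_le_sum step2) _
      _ = ((m:ℝ)+1) * Sf := step1.symm
  -- conclude via square roots
  have hdiv : Sg ≤ (((m:ℕ)+1 : ℝ)) / (1 + r^2) * Sf := by
    rw [div_mul_eq_mul_div, le_div_iff₀ hrpos]
    calc Sg * (1 + r^2) = (1 + r^2) * Sg := by ring
      _ ≤ ((m:ℝ)+1) * Sf := main
  have hK : (0:ℝ) ≤ (((m:ℕ)+1 : ℝ)) / (1 + r^2) := by positivity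
  calc weylNorm m g = Real.sqrt Sg := by rw [weylNorm, hSg]
    _ ≤ Real.sqrt ((((m:ℕ)+1 : ℝ)) / (1 + r^2) * Sf) := Real.sqrt_le_sqrt hdiv
    _ = Real.sqrt ((((m:ℕ)+1 : ℝ)) / (1 + r^2)) * Real.sqrt Sf := Real.sqrt_mul hK _
    _ = Real.sqrt (((m+1 : ℕ) : ℝ) / (1 + ‖ζ₁‖ ^ 2)) * weylNorm (m+1) f := by
        have h1 : weylNorm (m+1) f = Real.sqrt Sf := by
          rw [weylNorm, hSf]
        rw [h1]
        congr 2
        push_cast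
        ring
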